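/- For each prime p and n ≥ 1, the truncated Lyapunov spectrum at the midpoint value α = ((n+1)/2)·log p equals L_{p,n}(α) = (2/(n+1))·( log(p−1) + log n )/log p, i.e. (1/α)·(P_n(0) + 0·α) with t_α = 0. -/

import Mathlib

open Classical in
/-- The truncated pressure `P_n(−t log ψ)`, with `P_n(0) = log((p−1)n)`. -/
noncomputable def truncatedPressure (p n : ℕ) (t : ℝ) : ℝ :=
  if t = 0 then Real.log (((p : ℝ) - 1) * n)
  else Real.log ((p : ℝ) - 1)
    + Real.log (((p : ℝ) ^ (t * n) - 1) / ((p : ℝ) ^ (t * n) * ((p : ℝ) ^ t - 1)))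

/-- For `p` prime and `n ≥ 1`, the truncated Lyapunov spectrum
`L_{p,n}(α) = (1/α)·inf_{t∈ℝ}{P_n(−t log ψ) + tα}` evaluated at the midpoint
`α = ((n+1)/2)·log p` equals `(2/(n+1))·(log(p−1) + log n)/log p`, the infimum
being attained at `t_α = 0`. -/
lemma amgm_geom (x : ℝ) (hx : 0 < x) (n : ℕ) (hn : 1 ≤ n) :
    (n : ℝ) * x ^ (((n : ℝ) - 1) / 2) ≤ ∑ i ∈ Finset.range n, x ^ i := by
  set c : ℝ := x ^ (((n : ℝ) - 1) / 2) with hc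
  have hcpos : 0 < c := Real.rpow_pos_of_pos hx _
  have hc2 : c ^ 2 = x ^ (n - 1) := by
    rw [hc, ← Real.rpow_natCast x (n - 1), ← Real.rpow_natCast _ 2, ← Real.rpow_mul hx.le]
    congr 1
    have : ((n - 1 : ℕ) : ℝ) = (n : ℝ) - 1 := by
      push_cast [Nat.cast_sub hn]; ring
    rw [this]; ring
  have key : ∀ k ∈ Finset.range n, 2 * c ≤ x ^ k + x ^ (n - 1 - k) := by
    intro k hk
    rw [Finset.mem_range] at hk
    have hkk : k + (n - 1 - k) = n - 1 := by omega
    have hmul : x ^ k * x ^ (n - 1 - k) = x ^ (n - 1) := by rw [← pow_add, hkk]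
    have hcsqrt : c = Real.sqrt (x ^ (n - 1)) := by
      rw [← hc2, Real.sqrt_sq hcpos.le]
    have h1 : c = Real.sqrt (x ^ k) * Real.sqrt (x ^ (n - 1 - k)) := by
      rw [hcsqrt, ← hmul, Real.sqrt_mul (by positivity)]
    calc 2 * c = 2 * (Real.sqrt (x ^ k) * Real.sqrt (x ^ (n - 1 - k))) := by rw [h1]
      _ ≤ Real.sqrt (x ^ k) ^ 2 + Real.sqrt (x ^ (n - 1 - k)) ^ 2 := by
          nlinarith [sq_nonneg (Real.sqrt (x ^ k) - Real.sqrt (x ^ (n - 1 - k)))]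
      _ = x ^ k + x ^ (n - 1 - k) := by
          rw [Real.sq_sqrt (by positivity), Real.sq_sqrt (by positivity)]
  have hsum := Finset.sum_le_sum key
  have hrefl : ∑ k ∈ Finset.range n, x ^ (n - 1 - k) = ∑ k ∈ Finset.range n, x ^ k :=
    Finset.sum_range_reflect (fun k => x ^ k) n
  rw [Finset.sum_add_distrib, hrefl, Finset.sum_const, Finset.card_range] at hsum
  have : (n : ℝ) * (2 * c) ≤ 2 * ∑ k ∈ Finset.range n, x ^ k := by
    rw [nsmul_eq_mul] at hsum; linarith
  linarith


lemma lb (p n : ℕ) (hp : 2 ≤ p) (hn : 1 ≤ n) (t : ℝ) :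
    Real.log (((p : ℝ) - 1) * n) ≤
      truncatedPressure p n t + t * ((((n : ℝ) + 1) / 2) * Real.log p) := by
  rcases eq_or_ne t 0 with rfl | ht
  · simp [truncatedPressure]
  have hppos : (0 : ℝ) < p := by positivity
  have hp1 : (1 : ℝ) < (p : ℝ) := by exact_mod_cast hp
  have hlogp : 0 < Real.log p := Real.log_pos hp1
  set x : ℝ := (p : ℝ) ^ t with hxdef
  have hx : 0 < x := Real.rpow_pos_of_pos hppos t
  have hlogx : Real.log x = t * Real.log p := Real.log_rpow hppos t
  have hx1 : x ≠ 1 := by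
    intro h
    apply ht
    have : t * Real.log p = 0 := by rw [← hlogx, h, Real.log_one]
    rcases mul_eq_zero.1 this with h' | h'
    · exact h'
    · exact absurd h' hlogp.ne'
  have hxn : (p : ℝ) ^ (t * (n : ℝ)) = x ^ n := by
    rw [Real.rpow_mul hppos.le, Real.rpow_natCast]
  set S : ℝ := ∑ i ∈ Finset.range n, x ^ i with hSdef
  have hSpos : 0 < S := by
    apply Finset.sum_pos (fun i _ => pow_pos hx i)
    exact Finset.nonempty_range_iff.2 (by omega)
  have heq : (x ^ n - 1) / (x ^ n * (x - 1)) = S / x ^ n := by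
    rw [← geom_sum_mul x n]
    rw [show x ^ n * (x - 1) = (x - 1) * x ^ n by ring, ← div_div, mul_div_assoc,
      div_self (sub_ne_zero.2 hx1), mul_one]
  have hpress : truncatedPressure p n t =
      Real.log ((p : ℝ) - 1) + (Real.log S - (n : ℝ) * Real.log x) := by
    rw [truncatedPressure, if_neg ht, hxn, heq, Real.log_div hSpos.ne' (by positivity),
      Real.log_pow]
  have htα : t * ((((n : ℝ) + 1) / 2) * Real.log p) = (((n : ℝ) + 1) / 2) * Real.log x := by
    rw [hlogx]; ring
  have hf0 : Real.log (((p : ℝ) - 1) * n) = Real.log ((p : ℝ) - 1) + Real.log n := by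
    rw [Real.log_mul (by linarith) (by positivity)]
  rw [hpress, htα, hf0]
  have hkey : Real.log n + (((n : ℝ) - 1) / 2) * Real.log x ≤ Real.log S := by
    have h1 : Real.log ((n : ℝ) * x ^ (((n : ℝ) - 1) / 2)) ≤ Real.log S :=
      Real.log_le_log (by positivity) (amgm_geom x hx n hn)
    rwa [Real.log_mul (by positivity) (by positivity), Real.log_rpow hx] at h1
  linarith

theorem truncated_spectrum_midpoint (p n : ℕ) [Fact p.Prime] (hn : 1 ≤ n) :
    (1 / ((((n : ℝ) + 1) / 2) * Real.log p)) *
      sInf {y : ℝ | ∃ t : ℝ,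
        y = truncatedPressure p n t + t * ((((n : ℝ) + 1) / 2) * Real.log p)}
      = (2 / ((n : ℝ) + 1)) * ((Real.log ((p : ℝ) - 1) + Real.log n) / Real.log p) := by
  have hp : 2 ≤ p := (Fact.out : p.Prime).two_le
  have hp1 : (1 : ℝ) < (p : ℝ) := by exact_mod_cast hp
  have hlogp : 0 < Real.log p := Real.log_pos hp1
  set f0 : ℝ := Real.log (((p : ℝ) - 1) * n) with hf0def
  have hmem : f0 ∈ {y : ℝ | ∃ t : ℝ,
      y = truncatedPressure p n t + t * ((((n : ℝ) + 1) / 2) * Real.log p)} :=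
    ⟨0, by simp [truncatedPressure, hf0def]⟩
  have hbdd : BddBelow {y : ℝ | ∃ t : ℝ,
      y = truncatedPressure p n t + t * ((((n : ℝ) + 1) / 2) * Real.log p)} := by
    refine ⟨f0, ?_⟩
    rintro y ⟨t, rfl⟩
    exact lb p n hp hn t
  have hinf : sInf {y : ℝ | ∃ t : ℝ,
      y = truncatedPressure p n t + t * ((((n : ℝ) + 1) / 2) * Real.log p)} = f0 := by
    refine le_antisymm (csInf_le hbdd hmem) (le_csInf ⟨f0, hmem⟩ ?_)
    rintro y ⟨t, rfl⟩
    exact lb p n hp hn t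
  rw [hinf, hf0def, Real.log_mul (by linarith) (by positivity)]
  have hn1 : ((n : ℝ) + 1) ≠ 0 := by positivity
  field_simp
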